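/- Cocartesian structure of the Grothendieck construction of an extensive indexed category: if L : C^op → Cat is an extensive strictly indexed category with C having finite coproducts and each fibre L(W) having an initial object 0, then Σ_C L has initial object (0, 0) and binary coproducts given by (W, w) ⊔ (X, x) = (W ⊔ X, ε^{(W,X)}(w, x)), and these coproducts are preserved on the nose by the projection to C. -/

import Mathlib

universe w₂ w₁ v u

open CategoryTheory CategoryTheory.Limits Opposite

namespace CHAD

variable {C : Type u} [Category.{v} C]

/-- The total category (Grothendieck construction) `Σ_C L` of a strictly indexed category
`L : Cᵒᵖ ⥤ Cat`. -/
structure Total (L : Cᵒᵖ ⥤ Cat.{w₂, w₁}) where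
  base : C
  fib : L.obj (op base)

namespace Total

variable {L : Cᵒᵖ ⥤ Cat.{w₂, w₁}}

/-- A morphism `(W, w) ⟶ (X, x)` in `Σ_C L` is a pair `(f : W ⟶ X, f̄ : w ⟶ L(f)(x))`. -/
structure Hom (X Y : Total L) where
  base : X.base ⟶ Y.base
  fib : X.fib ⟶ (L.map base.op).toFunctor.obj Y.fib

theorem Hom.ext' {X Y : Total L} (f g : Hom X Y) (w_base : f.base = g.base)
    (w_fib : f.fib ≫ eqToHom (by rw [w_base]) = g.fib) : f = g := by
  cases f; cases g
  dsimp at w_base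
  subst w_base
  simpa using w_fib

/-- Identity morphism. -/
def id (X : Total L) : Hom X X where
  base := 𝟙 X.base
  fib := eqToHom (by simp)

/-- Composition of morphisms. -/
def comp {X Y Z : Total L} (f : Hom X Y) (g : Hom Y Z) : Hom X Z where
  base := f.base ≫ g.base
  fib := f.fib ≫ (L.map f.base.op).toFunctor.map g.fib ≫ eqToHom (by rw [op_comp, Functor.map_comp]; rfl)

attribute [local simp] eqToHom_map

instance : Category (Total L) where
  Hom X Y := Total.Hom X Y
  id X := Total.id X
  comp f g := Total.comp f g
  id_comp f := by
    refine Hom.ext' _ _ (by simp [comp, id]) ?_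
    dsimp [comp, id]
    rw [Functor.congr_hom (congrArg Cat.Hom.toFunctor (L.map_id (op _))) f.fib]
    simp
    have aux : ∀ {D : Type w₁} [Category.{w₂} D] {A B B1 B2 : D} (a : A ⟶ B) (p : B = B1)
        (q : B1 = B2) (r : B2 = B), a ≫ eqToHom p ≫ eqToHom q ≫ eqToHom r = a := by
      intros; subst_vars; simp
    exact aux _ _ _ _
  comp_id f := by
    refine Hom.ext' _ _ (by simp [comp, id]) ?_
    dsimp [comp, id]
    simp
    have aux : ∀ {D : Type w₁} [Category.{w₂} D] {A B B1 B2 : D} (a : A ⟶ B) (p : B = B1)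
        (q : B1 = B2) (r : B2 = B), a ≫ eqToHom p ≫ eqToHom q ≫ eqToHom r = a := by
      intros; subst_vars; simp
    exact aux _ _ _ _
  assoc f g h := by
    refine Hom.ext' _ _ (by simp [comp, id]) ?_
    dsimp [comp]
    simp [Functor.congr_hom (congrArg Cat.Hom.toFunctor (L.map_comp _ _)) h.fib]
    have aux : ∀ {D : Type w₁} [Category.{w₂} D] {A B B1 B2 B3 B4 : D} (a : A ⟶ B) (p : B = B1)
        (q : B1 = B2) (r : B2 = B3) (p' : B = B4) (q' : B4 = B3),
        ((a ≫ eqToHom p) ≫ eqToHom q) ≫ eqToHom r = (a ≫ eqToHom p') ≫ eqToHom q' := by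
      intros; subst_vars; simp
    simp only [← Category.assoc]
    exact aux _ _ _ _ _ _

variable (L)

/-- The projection functor `Σ_C L ⥤ C`. -/
def proj : Total L ⥤ C where
  obj X := X.base
  map f := f.base
  map_id _ := rfl
  map_comp _ _ := rfl

end Total

end CHAD

/-!
Cocartesian structure of the Grothendieck construction of an extensive indexed category: if
`L : Cᵒᵖ ⥤ Cat` is an extensive strictly indexed category, `C` has finite coproducts and each
fibre `L(W)` has an initial object `0`, then `Σ_C L` has initial object `(0, 0)` and binary
coproducts `(W, w) ⊔ (X, x) = (W ⊔ X, ε^{(W,X)}(w, x))`, and these coproducts are preserved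
on the nose by the projection to `C`.
-/

namespace CHAD

open CategoryTheory CategoryTheory.Limits Opposite

variable {C : Type u} [Category.{v} C] [HasInitial C] [HasBinaryCoproducts C]
variable (L : Cᵒᵖ ⥤ Cat.{w₂, w₁}) [∀ X : Cᵒᵖ, HasInitial (L.obj X)]

/-- The canonical pairing functor `(L(ι_W), L(ι_X)) : L(W ⊔ X) ⥤ L(W) × L(X)`. -/
noncomputable def pairing (W X : C) : (L.obj (op (W ⨿ X))) ⥤ (↑(L.obj (op W)) × ↑(L.obj (op X))) :=
  Functor.prod' (L.map (coprod.inl : W ⟶ W ⨿ X).op).toFunctor (L.map (coprod.inr : X ⟶ W ⨿ X).op).toFunctor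

variable (ε : ∀ W X : C, (↑(L.obj (op W)) × ↑(L.obj (op X))) ⥤ L.obj (op (W ⨿ X)))

/-- The candidate initial object `(0, 0)` of `Σ_C L`. -/
noncomputable def initObj : Total L :=
  ⟨⊥_ C, ⊥_ (L.obj (op (⊥_ C)))⟩

/-- The candidate binary coproduct `(W ⊔ X, ε^{(W,X)}(w, x))` of `(W, w)` and `(X, x)`. -/
noncomputable def coprodObj (W X : Total L) : Total L :=
  ⟨W.base ⨿ X.base, (ε W.base X.base).obj ⟨W.fib, X.fib⟩⟩

section

variable (hε₁ : ∀ W X : C, ε W X ⋙ pairing L W X = 𝟭 (↑(L.obj (op W)) × ↑(L.obj (op X))))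

/-- The first coproduct coprojection in `Σ_C L`. -/
noncomputable def coprodInl (W X : Total L) : W ⟶ coprodObj L ε W X :=
  ⟨coprod.inl,
    eqToHom (congrArg Prod.fst
      (Functor.congr_obj (hε₁ W.base X.base) ⟨W.fib, X.fib⟩)).symm⟩

/-- The second coproduct coprojection in `Σ_C L`. -/
noncomputable def coprodInr (W X : Total L) : X ⟶ coprodObj L ε W X :=
  ⟨coprod.inr,
    eqToHom (congrArg Prod.snd
      (Functor.congr_obj (hε₁ W.base X.base) ⟨W.fib, X.fib⟩)).symm⟩


section Aux

set_option linter.unusedSectionVars false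

theorem Total.Hom.fib_eq {A B : Total L} {f g : A ⟶ B} (h : f = g) :
    Total.Hom.fib f ≫ eqToHom (by rw [h]) = Total.Hom.fib g := by
  subst h; simp

theorem comp_base {A B D : Total L} (f : A ⟶ B) (g : B ⟶ D) :
    Total.Hom.base (f ≫ g) = Total.Hom.base f ≫ Total.Hom.base g := rfl

theorem comp_fib {A B D : Total L} (f : A ⟶ B) (g : B ⟶ D) :
    Total.Hom.fib (f ≫ g) =
      Total.Hom.fib f ≫ (L.map (Total.Hom.base f).op).toFunctor.map (Total.Hom.fib g) ≫
        eqToHom (by rw [comp_base, op_comp, Functor.map_comp]; rfl) := rfl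

theorem prod_eqToHom_fst' {A : Type*} {B : Type*} [Category A] [Category B]
    {x y : A × B} (h : x = y) :
    (eqToHom h).1 = eqToHom (congrArg Prod.fst h) := by subst h; rfl

theorem prod_eqToHom_snd' {A : Type*} {B : Type*} [Category A] [Category B]
    {x y : A × B} (h : x = y) :
    (eqToHom h).2 = eqToHom (congrArg Prod.snd h) := by subst h; rfl

theorem pairing_faithful
    (hε₂ : ∀ W X : C, pairing L W X ⋙ ε W X = 𝟭 (L.obj (op (W ⨿ X))))
    {W X : C} {a b : L.obj (op (W ⨿ X))} {u v : a ⟶ b}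
    (h : (pairing L W X).map u = (pairing L W X).map v) : u = v := by
  have hu := Functor.congr_hom (hε₂ W X) u
  have hv := Functor.congr_hom (hε₂ W X) v
  have h2 : (pairing L W X ⋙ ε W X).map u = (pairing L W X ⋙ ε W X).map v := by
    show (ε W X).map ((pairing L W X).map u) = (ε W X).map ((pairing L W X).map v)
    rw [h]
  rw [hu, hv] at h2
  simp only [Functor.id_map] at h2
  exact (cancel_mono _).1 ((cancel_epi _).1 h2)

theorem map_inl_obj {W X Z : C} (d : W ⨿ X ⟶ Z) (t : L.obj (op Z)) :
    (L.map (coprod.inl : W ⟶ W ⨿ X).op).toFunctor.obj ((L.map d.op).toFunctor.obj t)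
      = (L.map (coprod.inl ≫ d).op).toFunctor.obj t := by
  rw [op_comp, L.map_comp]; rfl

theorem map_inr_obj {W X Z : C} (d : W ⨿ X ⟶ Z) (t : L.obj (op Z)) :
    (L.map (coprod.inr : X ⟶ W ⨿ X).op).toFunctor.obj ((L.map d.op).toFunctor.obj t)
      = (L.map (coprod.inr ≫ d).op).toFunctor.obj t := by
  rw [op_comp, L.map_comp]; rfl

theorem pairing_fst_map {W X : C}
    {a b : ↑(L.obj (op W)) × ↑(L.obj (op X))} (u : a ⟶ b) :
    (L.map (coprod.inl : W ⟶ W ⨿ X).op).toFunctor.map ((ε W X).map u) =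
      eqToHom (congrArg Prod.fst (Functor.congr_obj (hε₁ W X) a)) ≫ u.1 ≫
      eqToHom (congrArg Prod.fst (Functor.congr_obj (hε₁ W X) b)).symm := by
  have h := congrArg Prod.fst (Functor.congr_hom (hε₁ W X) u)
  simp only [Functor.comp_map, Functor.id_map, prod_comp,
    prod_eqToHom_fst'] at h
  exact h

theorem pairing_snd_map {W X : C}
    {a b : ↑(L.obj (op W)) × ↑(L.obj (op X))} (u : a ⟶ b) :
    (L.map (coprod.inr : X ⟶ W ⨿ X).op).toFunctor.map ((ε W X).map u) =
      eqToHom (congrArg Prod.snd (Functor.congr_obj (hε₁ W X) a)) ≫ u.2 ≫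
      eqToHom (congrArg Prod.snd (Functor.congr_obj (hε₁ W X) b)).symm := by
  have h := congrArg Prod.snd (Functor.congr_hom (hε₁ W X) u)
  simp only [Functor.comp_map, Functor.id_map, prod_comp,
    prod_eqToHom_snd'] at h
  exact h

theorem aux_cancel {D : Type*} [Category D] {a a' b c d : D} (s : a' = a)
    (A B : a ⟶ b) (p : b = c) (q : c = d) (r : b = d)
    (h : eqToHom s ≫ A ≫ eqToHom p ≫ eqToHom q = eqToHom s ≫ B ≫ eqToHom r) : A = B := by
  subst s p q
  obtain rfl : r = rfl := rfl
  simpa using h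

theorem aux_inl {D E : Type*} [Category D] [Category E] (F : D ⥤ E) {a b c : D}
    {A Z1 Z2 Y : E} (x : a ⟶ b) (φ : A ⟶ Z2) (e : b = c) (p0 : A = F.obj a)
    (p1 : F.obj c = Z1) (p2 : Z1 = Z2) (s : F.obj a = A) (q : Z2 = Y) (t : Y = F.obj b)
    (hx : F.map x = eqToHom s ≫ (φ ≫ eqToHom q) ≫ eqToHom t) :
    (eqToHom p0 ≫ F.map (x ≫ eqToHom e) ≫ eqToHom p1) ≫ eqToHom p2 = φ := by
  subst p0 e p1 p2 q
  obtain rfl : s = rfl := rfl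
  obtain rfl : t = rfl := rfl
  simp [hx]

variable (hε₂ : ∀ W X : C, pairing L W X ⋙ ε W X = 𝟭 (L.obj (op (W ⨿ X))))

/-- The coproduct descent morphism in `Σ_C L`. -/
noncomputable def coprodDesc {W X T : Total L} (f : W ⟶ T) (g : X ⟶ T) :
    coprodObj L ε W X ⟶ T where
  base := coprod.desc (Total.Hom.base f) (Total.Hom.base g)
  fib := (ε W.base X.base).map
      (show (⟨W.fib, X.fib⟩ : ↑(L.obj (op W.base)) × ↑(L.obj (op X.base))) ⟶
          (pairing L W.base X.base).obj
            ((L.map (coprod.desc (Total.Hom.base f) (Total.Hom.base g)).op).toFunctor.obj T.fib) from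
        ⟨Total.Hom.fib f ≫ eqToHom (by
            dsimp [pairing]; rw [map_inl_obj, coprod.inl_desc]),
         Total.Hom.fib g ≫ eqToHom (by
            dsimp [pairing]; rw [map_inr_obj, coprod.inr_desc])⟩)
    ≫ eqToHom (Functor.congr_obj (hε₂ W.base X.base) _)

theorem coprodDesc_inl {W X T : Total L} (f : W ⟶ T) (g : X ⟶ T) :
    coprodInl L ε hε₁ W X ≫ coprodDesc L ε hε₂ f g = f := by
  refine Total.Hom.ext' _ _ (coprod.inl_desc _ _) ?_
  rw [comp_fib]
  dsimp only [coprodDesc, coprodInl]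
  exact aux_inl _ _ _ _ _ _ _ _ _ _ (pairing_fst_map L ε hε₁ _)

theorem coprodDesc_inr {W X T : Total L} (f : W ⟶ T) (g : X ⟶ T) :
    coprodInr L ε hε₁ W X ≫ coprodDesc L ε hε₂ f g = g := by
  refine Total.Hom.ext' _ _ (coprod.inr_desc _ _) ?_
  rw [comp_fib]
  dsimp only [coprodDesc, coprodInr]
  exact aux_inl _ _ _ _ _ _ _ _ _ _ (pairing_snd_map L ε hε₁ _)

include hε₂ in
theorem coprod_hom_ext {W X T : Total L} (h k : coprodObj L ε W X ⟶ T)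
    (hb : Total.Hom.base h = Total.Hom.base k)
    (e1 : coprodInl L ε hε₁ W X ≫ h = coprodInl L ε hε₁ W X ≫ k)
    (e2 : coprodInr L ε hε₁ W X ≫ h = coprodInr L ε hε₁ W X ≫ k) : h = k := by
  obtain ⟨hbase, hfib⟩ := h
  obtain ⟨kbase, kfib⟩ := k
  dsimp at hb
  subst hb
  refine Total.Hom.ext' _ _ rfl ?_
  simp only [eqToHom_refl, Category.comp_id]
  apply pairing_faithful L ε hε₂
  have t1 := Total.Hom.fib_eq L e1
  have t2 := Total.Hom.fib_eq L e2
  rw [comp_fib, comp_fib] at t1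
  rw [comp_fib, comp_fib] at t2
  dsimp only [coprodInl, coprodInr] at t1 t2
  simp only [Category.assoc, eqToHom_trans] at t1 t2
  apply Prod.ext
  · exact aux_cancel _ _ _ _ _ _ t1
  · exact aux_cancel _ _ _ _ _ _ t2

end Aux


theorem total_category_has_finite_coproducts
    (hε₂ : ∀ W X : C, pairing L W X ⋙ ε W X = 𝟭 (L.obj (op (W ⨿ X)))) :
    Nonempty (IsInitial (initObj L)) ∧
    (∀ W X : Total L,
      Nonempty (IsColimit
        (BinaryCofan.mk (coprodInl L ε hε₁ W X) (coprodInr L ε hε₁ W X)))) ∧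
    Nonempty (IsInitial ((Total.proj L).obj (initObj L))) ∧
    (∀ W X : Total L,
      Nonempty (IsColimit ((Total.proj L).mapCocone
        (BinaryCofan.mk (coprodInl L ε hε₁ W X) (coprodInr L ε hε₁ W X))))) := by
  refine ⟨⟨?_⟩, fun W X => ⟨?_⟩, ⟨?_⟩, fun W X => ⟨?_⟩⟩
  · exact IsInitial.ofUniqueHom
      (fun Y => ⟨initial.to Y.base, initial.to (C := L.obj (op (⊥_ C))) _⟩)
      (fun Y m => Total.Hom.ext' _ _ (initial.hom_ext _ _) (initial.hom_ext (C := L.obj (op (⊥_ C))) _ _))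
  · refine BinaryCofan.IsColimit.mk _
      (fun f g => coprodDesc L ε hε₂ f g)
      (fun f g => coprodDesc_inl L ε hε₁ hε₂ f g)
      (fun f g => coprodDesc_inr L ε hε₁ hε₂ f g)
      (fun f g m h1 h2 => ?_)
    refine coprod_hom_ext L ε hε₁ hε₂ m _ ?_
      (h1.trans (coprodDesc_inl L ε hε₁ hε₂ f g).symm)
      (h2.trans (coprodDesc_inr L ε hε₁ hε₂ f g).symm)
    apply coprod.hom_ext
    · exact (congrArg Total.Hom.base h1).trans (coprod.inl_desc _ _).symm
    · exact (congrArg Total.Hom.base h2).trans (coprod.inr_desc _ _).symm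
  · exact initialIsInitial
  · refine IsColimit.mk
      (fun s => coprod.desc (s.ι.app ⟨WalkingPair.left⟩) (s.ι.app ⟨WalkingPair.right⟩))
      (fun s j => ?_) (fun s m h => ?_)
    · rcases j with ⟨⟨⟩⟩
      · exact coprod.inl_desc _ _
      · exact coprod.inr_desc _ _
    · apply coprod.hom_ext
      · erw [coprod.inl_desc]; exact h ⟨WalkingPair.left⟩
      · exact (h ⟨WalkingPair.right⟩).trans (coprod.inr_desc _ _).symm

end

end CHAD
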